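/- Let P ⊆ ℝ^s be a closed convex set such that the collection of normal cones {N_P(y) : y ∈ P} is finite (e.g., P convex polyhedral). If {y_k} ⊆ P converges to ȳ and λ_k ∈ N_P(y_k) converges to λ̄, then there is a subsequence K ⊆ ℕ such that ⟨λ̄, y_k − ȳ⟩ = 0 for all k ∈ K. -/

import Mathlib

open Set Filter Topology Metric

noncomputable section

/-- Normal cone of convex analysis: `N_P(y) = {z* | ⟨z*, v - y⟩ ≤ 0 ∀ v ∈ P}`. -/
def convNormal {E : Type*} [NormedAddCommGroup E] [InnerProductSpace ℝ E]
    (P : Set E) (y : E) : Set E :=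
  {v | ∀ p ∈ P, (inner ℝ v (p - y) : ℝ) ≤ 0}

lemma convNormal_isClosed {E : Type*} [NormedAddCommGroup E] [InnerProductSpace ℝ E]
    (P : Set E) (y : E) : IsClosed (convNormal P y) := by
  have h : convNormal P y = ⋂ p ∈ P, {v : E | (inner ℝ v (p - y) : ℝ) ≤ 0} := by
    ext v; simp [convNormal]
  rw [h]
  exact isClosed_biInter fun p _ =>
    isClosed_le (Continuous.inner continuous_id continuous_const) continuous_const

theorem stmt1 {s : ℕ} (P : Set (EuclideanSpace ℝ (Fin s)))
    (hPc : IsClosed P) (hPconv : Convex ℝ P)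
    (hfin : ((fun y => convNormal P y) '' P).Finite)
    (y : ℕ → EuclideanSpace ℝ (Fin s)) (ybar : EuclideanSpace ℝ (Fin s))
    (hy : ∀ k, y k ∈ P) (hyt : Tendsto y atTop (𝓝 ybar))
    (lam : ℕ → EuclideanSpace ℝ (Fin s)) (lambar : EuclideanSpace ℝ (Fin s))
    (hlam : ∀ k, lam k ∈ convNormal P (y k)) (hlamt : Tendsto lam atTop (𝓝 lambar)) :
    ∃ K : ℕ → ℕ, StrictMono K ∧ ∀ k, (inner ℝ lambar (y (K k) - ybar) : ℝ) = 0 := by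
  have hybar : ybar ∈ P := hPc.mem_of_tendsto hyt (Filter.Eventually.of_forall hy)
  -- pigeonhole: some normal cone occurs infinitely often
  haveI := hfin.to_subtype
  set g : ℕ → ((fun y => convNormal P y) '' P) :=
    fun k => ⟨convNormal P (y k), ⟨y k, hy k, rfl⟩⟩ with hg
  obtain ⟨a, ha⟩ := Finite.exists_infinite_fiber g
  have hinf : {k | g k = a}.Infinite := by
    have h2 : (g ⁻¹' {a}).Infinite := Set.infinite_coe_iff.mp ha
    simpa [Set.preimage, Set.mem_singleton_iff] using h2
  set K : ℕ → ℕ := Nat.nth (fun k => g k = a)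
  have hmono : StrictMono K := Nat.nth_strictMono hinf
  have hmem : ∀ k, convNormal P (y (K k)) = (a : Set (EuclideanSpace ℝ (Fin s))) := by
    intro k
    have h := Nat.nth_mem_of_infinite hinf k
    exact congrArg Subtype.val h
  -- lambar is in the common cone a
  have hltK : Tendsto (fun k => lam (K k)) atTop (𝓝 lambar) :=
    hlamt.comp hmono.tendsto_atTop
  have hcl : IsClosed (a : Set (EuclideanSpace ℝ (Fin s))) := by
    rw [← hmem 0]; exact convNormal_isClosed P (y (K 0))
  have hlbar : lambar ∈ (a : Set (EuclideanSpace ℝ (Fin s))) :=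
    hcl.mem_of_tendsto hltK (Filter.Eventually.of_forall fun k => by
      rw [← hmem k]; exact hlam (K k))
  refine ⟨K, hmono, fun k => ?_⟩
  have hlbar' : ∀ m, lambar ∈ convNormal P (y (K m)) := fun m => by rw [hmem m]; exact hlbar
  -- ≥ 0
  have h1 : (inner ℝ lambar (ybar - y (K k)) : ℝ) ≤ 0 := hlbar' k ybar hybar
  -- ≤ 0 : limit of ⟨lambar, y(Kk) - y(Km)⟩ ≤ 0
  have h2 : ∀ m, (inner ℝ lambar (y (K k) - y (K m)) : ℝ) ≤ 0 := fun m =>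
    hlbar' m (y (K k)) (hy (K k))
  have hyK : Tendsto (fun m => y (K m)) atTop (𝓝 ybar) := hyt.comp hmono.tendsto_atTop
  have htend : Tendsto (fun m => (inner ℝ lambar (y (K k) - y (K m)) : ℝ)) atTop
      (𝓝 (inner ℝ lambar (y (K k) - ybar) : ℝ)) := by
    exact Tendsto.inner tendsto_const_nhds (Tendsto.sub tendsto_const_nhds hyK)
  have h3 : (inner ℝ lambar (y (K k) - ybar) : ℝ) ≤ 0 :=
    le_of_tendsto htend (Filter.Eventually.of_forall h2)
  have h4 : (inner ℝ lambar (ybar - y (K k)) : ℝ) = -(inner ℝ lambar (y (K k) - ybar) : ℝ) := by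
    rw [← inner_neg_right]; congr 1; abel
  linarith
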